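/- Let m₁ and m₂ be relatively prime natural numbers with m₁+m₂ even. Then the rhodonea curve ρ^{(m)}_α has minimal period π, and for t ∈ [0,2π) the set S^{(m)}(t) = {s ∈ [0,2π) : ρ^{(m)}_α(s) = ρ^{(m)}_α(t)} satisfies: (i) #S^{(m)}(t) = 2m₂ if t = t^{(m)}_l for some l ∈ {0,…,4m₁m₂−1} with l ≡ m₁ (mod 2m₁); (ii) #S^{(m)}(t) = 4 if t = t^{(m)}_{2l} for some l ∈ {0,…,2m₁m₂−1} with l ≢ 0 (mod m₁); (iii) #S^{(m)}(t) = 2 for all other t ∈ [0,2π). -/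

import Mathlib

noncomputable section

/-- The rhodonea curve `ρ^{(m)}_α`. -/
def rho (m₁ m₂ : ℕ) (α : ℝ) (t : ℝ) : ℝ × ℝ :=
  (Real.cos (m₂ * t) * Real.cos (m₁ * t - α * Real.pi),
   Real.cos (m₂ * t) * Real.sin (m₁ * t - α * Real.pi))

/-- The sampling parameters `t^{(m)}_l = l π / (2 m₁ m₂)`. -/
def tSample (m₁ m₂ : ℕ) (l : ℕ) : ℝ := l * Real.pi / (2 * m₁ * m₂)

/-- The set `S^{(m)}(t)` of parameters in `[0, 2π)` hitting the same point as `t`. -/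
def Sset (m₁ m₂ : ℕ) (α t : ℝ) : Set ℝ :=
  {s | s ∈ Set.Ico (0 : ℝ) (2 * Real.pi) ∧ rho m₁ m₂ α s = rho m₁ m₂ α t}

/-- The sample point set `LS^{(m)}_α` along the rhodonea curve. -/
def LSa (m₁ m₂ : ℕ) (α : ℝ) : Set (ℝ × ℝ) :=
  {p | ∃ l : ℕ, l < 4 * m₁ * m₂ ∧ p = rho m₁ m₂ α (tSample m₁ m₂ l)}

/-- The nodal index set `I^{(m)}` as a set. -/
def Idx (m₁ m₂ : ℕ) : Set (ℤ × ℤ) :=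
  {i | 0 ≤ i.1 ∧ i.1 ≤ (m₁ : ℤ) ∧ -(2 * (m₂ : ℤ)) < i.2 ∧ i.2 ≤ 2 * (m₂ : ℤ) ∧
       (i.1 = (m₁ : ℤ) → i.2 ≤ 0) ∧ Even (i.1 + i.2)}

/-- The nodal index set `I^{(m)}` as a finset. -/
def IdxF (m₁ m₂ : ℕ) : Finset (ℤ × ℤ) :=
  (Finset.Icc (0 : ℤ) (m₁ : ℤ) ×ˢ Finset.Ioc (-(2 * (m₂ : ℤ))) (2 * (m₂ : ℤ))).filter
    (fun i => (i.1 = (m₁ : ℤ) → i.2 ≤ 0) ∧ Even (i.1 + i.2))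

/-- Radial coordinate `r^{(m₁)}_{i₁} = cos(i₁ π / (2 m₁))`. -/
def rI (m₁ : ℕ) (i₁ : ℤ) : ℝ := Real.cos (i₁ * Real.pi / (2 * m₁))

/-- Angular coordinate `θ^{(m₂)}_{i₂} = i₂ π / (2 m₂)`. -/
def thetaI (m₂ : ℕ) (i₂ : ℤ) : ℝ := i₂ * Real.pi / (2 * m₂)

/-- The rhodonea node `x^{(m)}_i` in Cartesian coordinates. -/
def node (m₁ m₂ : ℕ) (i : ℤ × ℤ) : ℝ × ℝ :=
  (rI m₁ i.1 * Real.cos (thetaI m₂ i.2), rI m₁ i.1 * Real.sin (thetaI m₂ i.2))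

/-- The rhodonea node set `LS^{(m)}`. -/
def LS (m₁ m₂ : ℕ) : Set (ℝ × ℝ) := node m₁ m₂ '' Idx m₁ m₂

/-- Chebyshev polynomial of the first kind, `T_n(r) = cos(n arccos r)`. -/
def chebT (n : ℕ) (r : ℝ) : ℝ := Real.cos (n * Real.arccos r)

/-- The closed unit disk `𝔻 ⊆ ℝ²`. -/
def closedDisk : Set (ℝ × ℝ) := {x | x.1 ^ 2 + x.2 ^ 2 ≤ 1}

/-- The weights `w^{(m)}_i`. -/
def wgt (m₁ m₂ : ℕ) (i : ℤ × ℤ) : ℝ :=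
  if i.1 = 0 then 1 / (4 * m₁ * m₂) else 2 / (4 * m₁ * m₂)

/-- The discrete basis functions `χ^{(m)}_γ(i)`. -/
def chi (m₁ m₂ : ℕ) (γ i : ℤ × ℤ) : ℂ :=
  (Real.cos (γ.1 * i.1 * Real.pi / (2 * m₁)) : ℂ) *
    Complex.exp (Complex.I * (γ.2 * i.2 * Real.pi / (2 * m₂)))

/-- The discrete inner product `⟨f, g⟩_w` on `L(I^{(m)})`. -/
def innerW (m₁ m₂ : ℕ) (f g : ℤ × ℤ → ℂ) : ℂ :=
  ∑ i ∈ IdxF m₁ m₂, (wgt m₁ m₂ i : ℂ) * f i * (starRingEnd ℂ) (g i)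

/-- The rectangular spectral index set `Γ^{(m)}_□`. -/
def GammaSq (m₁ m₂ : ℕ) : Finset (ℤ × ℤ) :=
  (Finset.Icc (0 : ℤ) (2 * (m₁ : ℤ)) ×ˢ Finset.Ioc (-(m₂ : ℤ)) (m₂ : ℤ)).filter
    (fun γ => Even (γ.1 + γ.2))

/-- The full frequency box `K^{(m)}`. -/
def KSet (m₁ m₂ : ℕ) : Finset (ℤ × ℤ) :=
  Finset.Icc (0 : ℤ) (2 * (m₁ : ℤ)) ×ˢ Finset.Ioc (-(2 * (m₂ : ℤ))) (2 * (m₂ : ℤ))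

/-- The flip (glide-reflection) operator `γ ↦ γ*` on `K^{(m)}`, with second
coordinate `(γ₂ + 2m₂) mod 4m₂` taken in `(-2m₂, 2m₂]`. -/
def flipOp (m₁ m₂ : ℕ) (γ : ℤ × ℤ) : ℤ × ℤ :=
  (2 * (m₁ : ℤ) - γ.1, if γ.2 ≤ 0 then γ.2 + 2 * (m₂ : ℤ) else γ.2 - 2 * (m₂ : ℤ))

/-- `Γ` is a spectral index set for `I^{(m)}`: a subset of `K^{(m)}` satisfying the
parity condition whose functions `χ^{(m)}_γ` form an orthogonal basis of `L(I^{(m)})`. -/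
def IsSpectral (m₁ m₂ : ℕ) (Γ : Finset (ℤ × ℤ)) : Prop :=
  Γ ⊆ KSet m₁ m₂ ∧ (∀ γ ∈ Γ, Even (γ.1 + γ.2)) ∧
  (∀ γ ∈ Γ, ∀ γ' ∈ Γ, γ ≠ γ' → innerW m₁ m₂ (chi m₁ m₂ γ) (chi m₁ m₂ γ') = 0) ∧
  LinearIndependent ℂ (fun γ : ↥Γ => fun i : ↥(IdxF m₁ m₂) => chi m₁ m₂ γ.1 i.1) ∧
  Submodule.span ℂ
    (Set.range (fun γ : ↥Γ => fun i : ↥(IdxF m₁ m₂) => chi m₁ m₂ γ.1 i.1)) = ⊤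

/-- The real discrete basis functions `χ^{(m)}_{ℛ,γ}(i)` (for `γ ∈ Γ`). -/
def chiR (m₁ m₂ : ℕ) (Γ : Finset (ℤ × ℤ)) (γ i : ℤ × ℤ) : ℝ :=
  Real.cos (γ.1 * i.1 * Real.pi / (2 * m₁)) *
    (if ((γ.1, -γ.2) ∈ Γ ∧ 0 ≤ γ.2) ∨ ((γ.1, -γ.2) ∉ Γ ∧ γ.1 ≤ (m₁ : ℤ))
     then Real.cos (γ.2 * i.2 * Real.pi / (2 * m₂))
     else Real.sin (γ.2 * i.2 * Real.pi / (2 * m₂)))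

/-- The Chebyshev–Fourier basis functions `X_γ(r, θ) = T_{γ₁}(r) e^{i γ₂ θ}`. -/
def Xfun (γ : ℤ × ℤ) (p : ℝ × ℝ) : ℂ :=
  (Real.cos (γ.1 * Real.arccos p.1) : ℂ) * Complex.exp (Complex.I * (γ.2 * p.2))

/-- The real Chebyshev–Fourier basis functions `X_{ℛ,γ}` (for `γ ∈ Γ`). -/
def XRfun (m₁ : ℕ) (Γ : Finset (ℤ × ℤ)) (γ : ℤ × ℤ) (p : ℝ × ℝ) : ℝ :=
  Real.cos (γ.1 * Real.arccos p.1) *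
    (if ((γ.1, -γ.2) ∈ Γ ∧ 0 ≤ γ.2) ∨ ((γ.1, -γ.2) ∉ Γ ∧ γ.1 ≤ (m₁ : ℤ))
     then Real.cos (γ.2 * p.2) else Real.sin (γ.2 * p.2))

/-- The Lagrange functions `L^{(m)}_i`. -/
def Lag (m₁ m₂ : ℕ) (Γ : Finset (ℤ × ℤ)) (i : ℤ × ℤ) (p : ℝ × ℝ) : ℂ :=
  (wgt m₁ m₂ i : ℂ) *
    ∑ γ ∈ Γ, ((starRingEnd ℂ) (chi m₁ m₂ γ i) /
      innerW m₁ m₂ (chi m₁ m₂ γ) (chi m₁ m₂ γ)) * Xfun γ p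

/-- The complex-valued version of `X_{ℛ,γ}`. -/
def XRc (m₁ : ℕ) (Γ : Finset (ℤ × ℤ)) (γ : ℤ × ℤ) (p : ℝ × ℝ) : ℂ :=
  (XRfun m₁ Γ γ p : ℂ)

/-- The real Lagrange functions `L^{(m)}_{ℛ,i}`. -/
def LagR (m₁ m₂ : ℕ) (Γ : Finset (ℤ × ℤ)) (i : ℤ × ℤ) (p : ℝ × ℝ) : ℂ :=
  (wgt m₁ m₂ i : ℂ) *
    ∑ γ ∈ Γ, ((chiR m₁ m₂ Γ γ i /
        (∑ j ∈ IdxF m₁ m₂, wgt m₁ m₂ j * chiR m₁ m₂ Γ γ j ^ 2) : ℝ) : ℂ) * XRc m₁ Γ γ p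

end

open Real Complex

namespace RhoAux

lemma unit_sum_cases {z₁ z₂ w₁ w₂ : ℂ} (h₁ : ‖z₁‖ = 1) (h₂ : ‖z₂‖ = 1)
    (h₃ : ‖w₁‖ = 1) (h₄ : ‖w₂‖ = 1) (h : z₁ + z₂ = w₁ + w₂) :
    (w₁ = z₁ ∧ w₂ = z₂) ∨ (w₁ = z₂ ∧ w₂ = z₁) ∨ z₁ + z₂ = 0 := by
  by_cases hS : z₁ + z₂ = 0
  · exact Or.inr (Or.inr hS)
  have n₁ : z₁ * (starRingEnd ℂ) z₁ = 1 := by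
    rw [Complex.mul_conj]; norm_cast; rw [Complex.normSq_eq_norm_sq, h₁]; norm_num
  have n₂ : z₂ * (starRingEnd ℂ) z₂ = 1 := by
    rw [Complex.mul_conj]; norm_cast; rw [Complex.normSq_eq_norm_sq, h₂]; norm_num
  have n₃ : w₁ * (starRingEnd ℂ) w₁ = 1 := by
    rw [Complex.mul_conj]; norm_cast; rw [Complex.normSq_eq_norm_sq, h₃]; norm_num
  have n₄ : w₂ * (starRingEnd ℂ) w₂ = 1 := by
    rw [Complex.mul_conj]; norm_cast; rw [Complex.normSq_eq_norm_sq, h₄]; norm_num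
  have key₁ : (starRingEnd ℂ) (z₁ + z₂) * (z₁ * z₂) = z₁ + z₂ := by
    rw [map_add]
    calc ((starRingEnd ℂ) z₁ + (starRingEnd ℂ) z₂) * (z₁ * z₂)
        = (z₁ * (starRingEnd ℂ) z₁) * z₂ + (z₂ * (starRingEnd ℂ) z₂) * z₁ := by ring
      _ = z₁ + z₂ := by rw [n₁, n₂]; ring
  have key₂ : (starRingEnd ℂ) (w₁ + w₂) * (w₁ * w₂) = w₁ + w₂ := by
    rw [map_add]
    calc ((starRingEnd ℂ) w₁ + (starRingEnd ℂ) w₂) * (w₁ * w₂)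
        = (w₁ * (starRingEnd ℂ) w₁) * w₂ + (w₂ * (starRingEnd ℂ) w₂) * w₁ := by ring
      _ = w₁ + w₂ := by rw [n₃, n₄]; ring
  have hconj : (starRingEnd ℂ) (z₁ + z₂) ≠ 0 := fun hc => hS (by
    have := congrArg (starRingEnd ℂ) hc; simpa using this)
  have hprod : z₁ * z₂ = w₁ * w₂ := by
    apply mul_left_cancel₀ hconj
    rw [key₁, h]; exact key₂.symm
  have hz : (w₁ - z₁) * (w₁ - z₂) = 0 := by
    have : (w₁ - z₁) * (w₁ - z₂) = w₁ * w₁ - (z₁ + z₂) * w₁ + z₁ * z₂ := by ring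
    rw [this, h, hprod]; ring
  rcases mul_eq_zero.mp hz with h' | h'
  · have e1 : w₁ = z₁ := sub_eq_zero.mp h'
    refine Or.inl ⟨e1, ?_⟩
    have := h; rw [e1] at this; linear_combination -this
  · have e1 : w₁ = z₂ := sub_eq_zero.mp h'
    refine Or.inr (Or.inl ⟨e1, ?_⟩)
    have := h; rw [e1] at this; linear_combination -this


lemma expI_eq_iff (x y : ℝ) :
    Complex.exp (↑x * I) = Complex.exp (↑y * I) ↔ ∃ n : ℤ, x = y + n * (2 * π) := by
  rw [Complex.exp_eq_exp_iff_exists_int]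
  constructor
  · rintro ⟨n, hn⟩
    refine ⟨n, ?_⟩
    have h0 : ((x : ℂ) - (y + n * (2 * π))) * I = 0 := by
      push_cast
      linear_combination hn
    rcases mul_eq_zero.mp h0 with h' | h'
    · have : (x : ℂ) = ((y + n * (2 * π) : ℝ) : ℂ) := by push_cast; linear_combination h'
      exact_mod_cast this
    · exact absurd h' I_ne_zero
  · rintro ⟨n, hn⟩
    refine ⟨n, ?_⟩
    have : (x : ℂ) = ↑y + ↑n * (2 * ↑π) := by exact_mod_cast hn
    linear_combination this * I

lemma expI_eq_neg_iff (x y : ℝ) :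
    Complex.exp (↑x * I) = -Complex.exp (↑y * I) ↔ ∃ n : ℤ, x = y + π + n * (2 * π) := by
  have : -Complex.exp (↑y * I) = Complex.exp (↑(y + π) * I) := by
    rw [show ((y + π : ℝ) : ℂ) * I = ↑y * I + ↑π * I by push_cast; ring,
      Complex.exp_add, Complex.exp_pi_mul_I]
    ring
  rw [this, expI_eq_iff]

lemma cos_mul_expI (c θ : ℝ) :
    (↑(Real.cos c) : ℂ) * Complex.exp (↑θ * I) =
      (Complex.exp (↑(θ + c) * I) + Complex.exp (↑(θ - c) * I)) / 2 := by
  have hc : (↑(Real.cos c) : ℂ) = (Complex.exp (↑c * I) + Complex.exp (-↑c * I)) / 2 := by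
    rw [Complex.ofReal_cos]; rfl
  rw [hc]
  have e1 : Complex.exp (↑c * I) * Complex.exp (↑θ * I) = Complex.exp (↑(θ + c) * I) := by
    rw [← Complex.exp_add]; congr 1; push_cast; ring
  have e2 : Complex.exp (-↑c * I) * Complex.exp (↑θ * I) = Complex.exp (↑(θ - c) * I) := by
    rw [← Complex.exp_add]; congr 1; push_cast; ring
  rw [show (-↑c * I : ℂ) = -(↑c * I) by ring] at e2
  push_cast at e1 e2 ⊢
  rw [← e1, ← e2]; ring


lemma mk_eq_mk (a b a' b' : ℝ) : ((a : ℂ) + b * I = (a' : ℂ) + b' * I) ↔ a = a' ∧ b = b' := by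
  constructor
  · intro h
    constructor
    · have := congrArg Complex.re h; simpa using this
    · have := congrArg Complex.im h; simpa using this
  · rintro ⟨rfl, rfl⟩; rfl

lemma cos_mul_exp_eq (c θ c' θ' : ℝ) :
    ((↑(Real.cos c) : ℂ) * Complex.exp (↑θ * I) = ↑(Real.cos c') * Complex.exp (↑θ' * I)) ↔
    (Real.cos c * Real.cos θ = Real.cos c' * Real.cos θ' ∧
     Real.cos c * Real.sin θ = Real.cos c' * Real.sin θ') := by
  have key : ∀ (c θ : ℝ), (↑(Real.cos c) : ℂ) * Complex.exp (↑θ * I)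
      = ↑(Real.cos c * Real.cos θ) + ↑(Real.cos c * Real.sin θ) * I := by
    intro c θ
    rw [Complex.exp_mul_I, ← Complex.ofReal_cos, ← Complex.ofReal_sin]
    push_cast
    ring
  rw [key, key, mk_eq_mk]

lemma rho_eq_iff_sum (m₁ m₂ : ℕ) (α s t : ℝ) :
    rho m₁ m₂ α s = rho m₁ m₂ α t ↔
      Complex.exp (↑((m₁ : ℝ) * s + m₂ * s) * I) + Complex.exp (↑((m₁ : ℝ) * s - m₂ * s) * I) =
      Complex.exp (↑((m₁ : ℝ) * t + m₂ * t) * I) + Complex.exp (↑((m₁ : ℝ) * t - m₂ * t) * I) := by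
  have h1 : rho m₁ m₂ α s = rho m₁ m₂ α t ↔
      (↑(Real.cos ((m₂ : ℝ) * s)) : ℂ) * Complex.exp (↑((m₁ : ℝ) * s - α * π) * I)
        = ↑(Real.cos ((m₂ : ℝ) * t)) * Complex.exp (↑((m₁ : ℝ) * t - α * π) * I) := by
    rw [cos_mul_exp_eq]
    simp [rho, Prod.ext_iff]
  have hmul : ∀ x : ℝ,
      (↑(Real.cos ((m₂ : ℝ) * x)) : ℂ) * Complex.exp (↑((m₁ : ℝ) * x - α * π) * I)
        * Complex.exp (↑(α * π) * I) * 2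
      = Complex.exp (↑((m₁ : ℝ) * x + m₂ * x) * I) + Complex.exp (↑((m₁ : ℝ) * x - m₂ * x) * I) := by
    intro x
    have eadd : Complex.exp (↑((m₁ : ℝ) * x - α * π) * I) * Complex.exp (↑(α * π) * I)
        = Complex.exp (↑((m₁ : ℝ) * x) * I) := by
      rw [← Complex.exp_add]; congr 1; push_cast; ring
    calc (↑(Real.cos ((m₂ : ℝ) * x)) : ℂ) * Complex.exp (↑((m₁ : ℝ) * x - α * π) * I)
          * Complex.exp (↑(α * π) * I) * 2
        = ↑(Real.cos ((m₂ : ℝ) * x)) * (Complex.exp (↑((m₁ : ℝ) * x - α * π) * I)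
          * Complex.exp (↑(α * π) * I)) * 2 := by ring
      _ = ↑(Real.cos ((m₂ : ℝ) * x)) * Complex.exp (↑((m₁ : ℝ) * x) * I) * 2 := by rw [eadd]
      _ = _ := by rw [cos_mul_expI ((m₂ : ℝ) * x) ((m₁ : ℝ) * x)]; ring
  rw [h1]
  constructor
  · intro hA
    rw [← hmul s, ← hmul t, hA]
  · intro hB
    have h2 := hB
    rw [← hmul s, ← hmul t] at h2
    have h3 := mul_right_cancel₀ (two_ne_zero) h2
    exact mul_right_cancel₀ (Complex.exp_ne_zero _) h3


lemma rho_eq_iff' {m₁ m₂ : ℕ} (ho₁ : Odd m₁) (ho₂ : Odd m₂) (hcop : Nat.Coprime m₁ m₂)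
    (α s t : ℝ) :
    rho m₁ m₂ α s = rho m₁ m₂ α t ↔
      (∃ k : ℤ, s - t = k * π) ∨
      (∃ j k : ℤ, (m₁ : ℝ) * (s - t) = j * π ∧ (m₂ : ℝ) * (s + t) = k * π ∧ Even (j + k)) ∨
      (Real.cos (m₂ * s) = 0 ∧ Real.cos (m₂ * t) = 0) := by
  have hπ : (π : ℝ) ≠ 0 := Real.pi_ne_zero
  have hm₁ : 0 < m₁ := ho₁.pos
  have hm₁R : (m₁ : ℝ) ≠ 0 := by positivity
  rw [rho_eq_iff_sum]
  constructor
  · intro h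
    rcases unit_sum_cases (Complex.norm_exp_ofReal_mul_I _) (Complex.norm_exp_ofReal_mul_I _)
      (Complex.norm_exp_ofReal_mul_I _) (Complex.norm_exp_ofReal_mul_I _) h with ⟨hA, hB⟩ | ⟨hA, hB⟩ | h0
    · -- matched case
      obtain ⟨n, hn⟩ := (expI_eq_iff _ _).mp hA
      obtain ⟨n', hn'⟩ := (expI_eq_iff _ _).mp hB
      have e1 : (m₁ : ℝ) * (s - t) = -((n : ℝ) + n') * π := by
        linear_combination (-hn - hn') / 2
      have e2 : (m₂ : ℝ) * (s - t) = ((n' : ℝ) - n) * π := by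
        linear_combination (hn' - hn) / 2
      have hpq : (((m₂ : ℤ) * (-(n + n)) : ℝ)) = 0 → True := fun _ => trivial
      have hpqR : ((m₂ : ℝ) * (-((n : ℝ) + n'))) * π = ((m₁ : ℝ) * ((n' : ℝ) - n)) * π := by
        linear_combination (m₁ : ℝ) * e2 - (m₂ : ℝ) * e1
      have hZ : (m₂ : ℤ) * (-(n + n')) = (m₁ : ℤ) * (n' - n) := by
        have h' := mul_right_cancel₀ hπ hpqR
        exact_mod_cast h'
      have hco : IsCoprime (m₁ : ℤ) (m₂ : ℤ) := Int.isCoprime_iff_gcd_eq_one.mpr (by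
        rw [Int.gcd_natCast_natCast]; exact hcop)
      have hdvd : (m₁ : ℤ) ∣ -(n + n') :=
        hco.dvd_of_dvd_mul_left ⟨n' - n, by linear_combination hZ⟩
      obtain ⟨k, hk⟩ := hdvd
      refine Or.inl ⟨k, ?_⟩
      have hkR : -((n : ℝ) + n') = (m₁ : ℝ) * k := by exact_mod_cast hk
      have hfin : (m₁ : ℝ) * (s - t) = (m₁ : ℝ) * ((k : ℝ) * π) := by
        linear_combination e1 + π * hkR
      exact mul_left_cancel₀ hm₁R hfin
    · -- swapped case
      obtain ⟨n, hn⟩ := (expI_eq_iff _ _).mp hA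
      obtain ⟨n', hn'⟩ := (expI_eq_iff _ _).mp hB
      refine Or.inr (Or.inl ⟨-(n + n'), n - n', ?_, ?_, ⟨-n', by ring⟩⟩)
      · push_cast
        linear_combination (-hn - hn') / 2
      · push_cast
        linear_combination (hn - hn') / 2
    · -- zero case
      have h0' : Complex.exp (↑((m₁ : ℝ) * t + m₂ * t) * I)
          + Complex.exp (↑((m₁ : ℝ) * t - m₂ * t) * I) = 0 := by rw [← h]; exact h0
      refine Or.inr (Or.inr ⟨?_, ?_⟩)
      · obtain ⟨n, hn⟩ := (expI_eq_neg_iff _ _).mp (eq_neg_of_add_eq_zero_left h0)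
        exact Real.cos_eq_zero_iff.mpr ⟨n, by push_cast at hn ⊢; linarith⟩
      · obtain ⟨n, hn⟩ := (expI_eq_neg_iff _ _).mp (eq_neg_of_add_eq_zero_left h0')
        exact Real.cos_eq_zero_iff.mpr ⟨n, by push_cast at hn ⊢; linarith⟩
  · rintro (⟨k, hk⟩ | ⟨j, k, h1, h2, he⟩ | ⟨hs, ht⟩)
    · obtain ⟨c, hc⟩ := ho₁.add_odd ho₂
      obtain ⟨a, ha⟩ := ho₁
      obtain ⟨b, hb⟩ := ho₂
      have hcR : (m₁ : ℝ) + m₂ = (c : ℝ) + c := by exact_mod_cast hc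
      have hdR : (m₁ : ℝ) - m₂ = 2 * ((a : ℝ) - b) := by
        subst ha hb; push_cast; ring
      have E1 : Complex.exp (↑((m₁ : ℝ) * s + m₂ * s) * I)
          = Complex.exp (↑((m₁ : ℝ) * t + m₂ * t) * I) :=
        (expI_eq_iff _ _).mpr ⟨c * k, by
          push_cast
          linear_combination ((m₁ : ℝ) + m₂) * hk + ((k : ℝ) * π) * hcR⟩
      have E2 : Complex.exp (↑((m₁ : ℝ) * s - m₂ * s) * I)
          = Complex.exp (↑((m₁ : ℝ) * t - m₂ * t) * I) :=
        (expI_eq_iff _ _).mpr ⟨((a : ℤ) - b) * k, by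
          push_cast
          linear_combination ((m₁ : ℝ) - m₂) * hk + ((k : ℝ) * π) * hdR⟩
      rw [E1, E2]
    · obtain ⟨n, hn⟩ := he
      have hnR : (j : ℝ) + k = (n : ℝ) + n := by exact_mod_cast hn
      have E1 : Complex.exp (↑((m₁ : ℝ) * s + m₂ * s) * I)
          = Complex.exp (↑((m₁ : ℝ) * t - m₂ * t) * I) :=
        (expI_eq_iff _ _).mpr ⟨n, by
          push_cast
          linear_combination h1 + h2 + π * hnR⟩
      have E2 : Complex.exp (↑((m₁ : ℝ) * s - m₂ * s) * I)
          = Complex.exp (↑((m₁ : ℝ) * t + m₂ * t) * I) :=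
        (expI_eq_iff _ _).mpr ⟨n - k, by
          push_cast
          linear_combination h1 - h2 + π * hnR⟩
      rw [E1, E2]
      exact add_comm _ _
    · obtain ⟨n, hn⟩ := Real.cos_eq_zero_iff.mp hs
      obtain ⟨n', hn'⟩ := Real.cos_eq_zero_iff.mp ht
      have Es : Complex.exp (↑((m₁ : ℝ) * s + m₂ * s) * I)
          = -Complex.exp (↑((m₁ : ℝ) * s - m₂ * s) * I) :=
        (expI_eq_neg_iff _ _).mpr ⟨n, by push_cast at hn ⊢; linarith⟩
      have Et : Complex.exp (↑((m₁ : ℝ) * t + m₂ * t) * I)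
          = -Complex.exp (↑((m₁ : ℝ) * t - m₂ * t) * I) :=
        (expI_eq_neg_iff _ _).mpr ⟨n', by push_cast at hn' ⊢; linarith⟩
      rw [Es, Et]
      ring


/-- Parameters in `[0,2π)` congruent to `x` mod `π`. -/
def Dset (x : ℝ) : Set ℝ := {s | s ∈ Set.Ico (0 : ℝ) (2 * π) ∧ ∃ k : ℤ, s - x = k * π}

/-- Fractional part of `x` mod `π`. -/
noncomputable def fr (x : ℝ) : ℝ := x - π * ⌊x / π⌋

lemma fr_nonneg (x : ℝ) : 0 ≤ fr x := by
  have h : fr x = π * Int.fract (x / π) := by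
    rw [Int.fract, fr, mul_sub, mul_div_cancel₀ _ Real.pi_ne_zero]
  rw [h]
  exact mul_nonneg Real.pi_pos.le (Int.fract_nonneg _)

lemma fr_lt (x : ℝ) : fr x < π := by
  have h : fr x = π * Int.fract (x / π) := by
    rw [Int.fract, fr, mul_sub, mul_div_cancel₀ _ Real.pi_ne_zero]
  rw [h]
  nlinarith [Int.fract_lt_one (x / π), Real.pi_pos]

lemma fr_sub (x : ℝ) : ∃ k : ℤ, fr x - x = k * π := ⟨-⌊x / π⌋, by rw [fr]; push_cast; ring⟩

lemma Dset_eq (x : ℝ) : Dset x = {fr x, fr x + π} := by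
  have hπ := Real.pi_pos
  obtain ⟨k₀, hk₀⟩ := fr_sub x
  ext s
  simp only [Dset, Set.mem_setOf_eq, Set.mem_Ico, Set.mem_insert_iff, Set.mem_singleton_iff]
  constructor
  · rintro ⟨⟨hs0, hs2⟩, k, hk⟩
    have hdiff : s - fr x = ((k - k₀ : ℤ) : ℝ) * π := by push_cast; linarith
    set k' : ℤ := k - k₀ with hk'
    have h0 : 0 ≤ k' := by
      by_contra hneg
      push_neg at hneg
      have hk1 : k' ≤ -1 := by omega
      have : (k' : ℝ) ≤ -1 := by exact_mod_cast hk1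
      nlinarith [fr_lt x, fr_nonneg x]
    have h1 : k' ≤ 1 := by
      by_contra hgt
      push_neg at hgt
      have hk2 : 2 ≤ k' := by omega
      have : (2 : ℝ) ≤ (k' : ℝ) := by exact_mod_cast hk2
      nlinarith [fr_lt x, fr_nonneg x]
    interval_cases k'
    · left; simp at hdiff; linarith
    · right; simp at hdiff; linarith
  · rintro (rfl | rfl)
    · exact ⟨⟨fr_nonneg x, by nlinarith [fr_lt x]⟩, k₀, hk₀⟩
    · exact ⟨⟨by nlinarith [fr_nonneg x], by nlinarith [fr_lt x]⟩, k₀ + 1, by push_cast; linarith⟩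

lemma Dset_ncard (x : ℝ) : (Dset x).ncard = 2 := by
  rw [Dset_eq]
  exact Set.ncard_pair (by nlinarith [Real.pi_pos])

lemma Dset_finite (x : ℝ) : (Dset x).Finite := by
  rw [Dset_eq]; exact (Set.finite_singleton _).insert _

lemma Dset_disjoint {x y : ℝ} (h : ∀ k : ℤ, x - y ≠ k * π) : Disjoint (Dset x) (Dset y) := by
  rw [Set.disjoint_left]
  rintro s ⟨_, k, hk⟩ ⟨_, k', hk'⟩
  exact h (k' - k) (by push_cast; linarith)

lemma Dset_self_mem {x : ℝ} (hx : x ∈ Set.Ico (0 : ℝ) (2 * π)) : x ∈ Dset x :=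
  ⟨hx, 0, by simp⟩

lemma Dset_eq_of_mem_Ico {x : ℝ} (hx : x ∈ Set.Ico (0 : ℝ) π) : Dset x = {x, x + π} := by
  rw [Dset_eq]
  have : fr x = x := by
    rw [fr]
    have h0 : ⌊x / π⌋ = 0 := by
      rw [Int.floor_eq_zero_iff]
      constructor
      · exact div_nonneg hx.1 Real.pi_pos.le
      · rw [div_lt_one Real.pi_pos]; exact hx.2
    rw [h0]; simp
  rw [this]


/-- Parameters in `[0,2π)` where the curve passes through the origin. -/
def Zset (m₂ : ℕ) : Set ℝ := {s | s ∈ Set.Ico (0 : ℝ) (2 * π) ∧ Real.cos (m₂ * s) = 0}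

lemma Zset_eq {m₂ : ℕ} (hm₂ : 0 < m₂) :
    Zset m₂ = ↑((Finset.range (2 * m₂)).image fun k : ℕ => (2 * k + 1) * π / (2 * m₂)) := by
  have hπ := Real.pi_pos
  have hm₂R : (0 : ℝ) < m₂ := by exact_mod_cast hm₂
  ext s
  simp only [Zset, Set.mem_setOf_eq, Set.mem_Ico, Finset.coe_image, Set.mem_image,
    Finset.mem_coe, Finset.mem_range]
  constructor
  · rintro ⟨⟨hs0, hs2⟩, hc⟩
    obtain ⟨r, hr⟩ := Real.cos_eq_zero_iff.mp hc
    have hs : s = (2 * (r : ℝ) + 1) * π / (2 * m₂) := by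
      field_simp at hr ⊢
      linarith
    have hr0 : 0 ≤ r := by
      by_contra hneg
      push_neg at hneg
      have : r ≤ -1 := by omega
      have : (r : ℝ) ≤ -1 := by exact_mod_cast this
      have : (2 * (r : ℝ) + 1) ≤ -1 := by linarith
      nlinarith [hs0, hs]
    have hr2 : r < 2 * m₂ := by
      by_contra hge
      push_neg at hge
      have : (2 * (m₂ : ℝ)) ≤ (r : ℝ) := by exact_mod_cast hge
      have h4 : (4 * (m₂ : ℝ) + 1) ≤ 2 * (r : ℝ) + 1 := by linarith
      rw [hs] at hs2
      have : (2 * (r : ℝ) + 1) * π < 4 * m₂ * π := by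
        calc (2 * (r : ℝ) + 1) * π = ((2 * (r : ℝ) + 1) * π / (2 * m₂)) * (2 * m₂) := by
              field_simp
          _ < 2 * π * (2 * m₂) := by
              apply mul_lt_mul_of_pos_right hs2
              positivity
          _ = 4 * m₂ * π := by ring
      nlinarith
    refine ⟨r.toNat, ?_, ?_⟩
    · omega
    · rw [hs]
      congr 2
      have : ((r.toNat : ℤ) : ℝ) = (r : ℝ) := by rw [Int.toNat_of_nonneg hr0]
      push_cast at this ⊢
      linarith
  · rintro ⟨k, hk, rfl⟩
    have hkR : (k : ℝ) < 2 * m₂ := by exact_mod_cast hk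
    refine ⟨⟨by positivity, ?_⟩, ?_⟩
    · rw [div_lt_iff₀ (by positivity)]
      have hk' : (k : ℝ) + 1 ≤ 2 * m₂ := by exact_mod_cast hk
      nlinarith
    · apply Real.cos_eq_zero_iff.mpr
      refine ⟨(k : ℤ), ?_⟩
      push_cast
      field_simp
    
lemma Zset_ncard {m₂ : ℕ} (hm₂ : 0 < m₂) : (Zset m₂).ncard = 2 * m₂ := by
  rw [Zset_eq hm₂, Set.ncard_coe_finset]
  rw [Finset.card_image_of_injective _ ?_, Finset.card_range]
  intro a b hab
  have hπ := Real.pi_pos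
  have hm₂R : (0 : ℝ) < m₂ := by exact_mod_cast hm₂
  field_simp at hab
  exact_mod_cast (by linarith : (a : ℝ) = b)

lemma Sset_origin {m₁ m₂ : ℕ} {α t : ℝ} (hc : Real.cos (m₂ * t) = 0) :
    Sset m₁ m₂ α t = Zset m₂ := by
  have ht : rho m₁ m₂ α t = (0, 0) := by simp [rho, hc]
  ext s
  simp only [Sset, Zset, Set.mem_setOf_eq, ht]
  constructor
  · rintro ⟨hsI, hs⟩
    refine ⟨hsI, ?_⟩
    rw [rho, Prod.ext_iff] at hs
    obtain ⟨h1, h2⟩ := hs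
    simp only at h1 h2
    have hp := Real.sin_sq_add_cos_sq (m₁ * s - α * π)
    linear_combination Real.cos (m₁ * s - α * π) * h1 + Real.sin (m₁ * s - α * π) * h2
      - Real.cos (m₂ * s) * hp + Real.cos (m₂ * s) * (1 : ℝ) * 0
  · rintro ⟨hsI, hs⟩
    exact ⟨hsI, by simp [rho, hs]⟩


lemma Sset_generic {m₁ m₂ : ℕ} (ho₁ : Odd m₁) (ho₂ : Odd m₂) (hcop : Nat.Coprime m₁ m₂)
    (α : ℝ) {t : ℝ} (ht : t ∈ Set.Ico (0 : ℝ) (2 * π))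
    (hns : ¬ ((∃ l : ℕ, l < 4 * m₁ * m₂ ∧ t = tSample m₁ m₂ l ∧ l ≡ m₁ [MOD 2 * m₁]) ∨
       (∃ l : ℕ, l < 2 * m₁ * m₂ ∧ t = tSample m₁ m₂ (2 * l) ∧ ¬ l ≡ 0 [MOD m₁]))) :
    Sset m₁ m₂ α t = Dset t := by
  have hπ := Real.pi_pos
  have hm₁ : 0 < m₁ := ho₁.pos
  have hm₂ : 0 < m₂ := ho₂.pos
  have hm₁R : (m₁ : ℝ) ≠ 0 := by positivity
  have hm₂R : (m₂ : ℝ) ≠ 0 := by positivity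
  push_neg at hns
  obtain ⟨hns1, hns2⟩ := hns
  ext s
  constructor
  · rintro ⟨hsI, hs⟩
    rw [rho_eq_iff' ho₁ ho₂ hcop] at hs
    rcases hs with ⟨k, hk⟩ | ⟨j, k, h1, h2, he⟩ | ⟨hcs, hct⟩
    · exact ⟨hsI, k, hk⟩
    · by_cases hdvd : (m₁ : ℤ) ∣ j
      · obtain ⟨r, hr⟩ := hdvd
        refine ⟨hsI, r, ?_⟩
        have hjR : (j : ℝ) = (m₁ : ℝ) * r := by exact_mod_cast hr
        have hfin : (m₁ : ℝ) * (s - t) = (m₁ : ℝ) * ((r : ℝ) * π) := by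
          rw [h1]; linear_combination π * hjR
        exact mul_left_cancel₀ hm₁R hfin
      · exfalso
        have hm₁pos : (0 : ℝ) < m₁ := by positivity
        have hm₂pos : (0 : ℝ) < m₂ := by positivity
        set N : ℤ := (m₁ : ℤ) * k - (m₂ : ℤ) * j with hN
        have hNcast : ((N : ℤ) : ℝ) = (m₁ : ℝ) * (k : ℝ) - (m₂ : ℝ) * (j : ℝ) := by
          rw [hN]; push_cast; ring
        have hNR : 2 * (m₁ : ℝ) * m₂ * t = (N : ℝ) * π := by
          rw [hNcast]
          linear_combination (m₁ : ℝ) * h2 - (m₂ : ℝ) * h1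
        have htub : 2 * (m₁ : ℝ) * m₂ * t < 2 * (m₁ : ℝ) * m₂ * (2 * π) :=
          mul_lt_mul_of_pos_left ht.2 (by positivity)
        have htlb : 0 ≤ 2 * (m₁ : ℝ) * m₂ * t :=
          mul_nonneg (by positivity) ht.1
        have hN0 : 0 ≤ N := by
          by_contra hneg
          push_neg at hneg
          have : N ≤ -1 := by omega
          have hc : (N : ℝ) ≤ -1 := by exact_mod_cast this
          nlinarith [htlb, hNR, hπ]
        have hN4 : N < 4 * m₁ * m₂ := by
          by_contra hge
          push_neg at hge
          have hc : (4 * (m₁ : ℝ) * m₂) ≤ (N : ℝ) := by exact_mod_cast hge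
          nlinarith [htub, hNR, hπ]
        obtain ⟨a, ha⟩ := ho₁
        obtain ⟨b, hb⟩ := ho₂
        obtain ⟨n, hn⟩ := he
        have haZ : (m₁ : ℤ) = 2 * a + 1 := by exact_mod_cast ha
        have hbZ : (m₂ : ℤ) = 2 * b + 1 := by exact_mod_cast hb
        have hNe : N = 2 * ((a : ℤ) * k - b * j + n - j) := by
          rw [hN, haZ, hbZ]
          linear_combination hn
        set l' : ℤ := (a : ℤ) * k - b * j + n - j with hl'
        have hfour : (4 * m₁ * m₂ : ℤ) = 2 * (2 * (m₁ : ℤ) * m₂) := by ring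
        have hl'0 : 0 ≤ l' := by omega
        have hl'2 : l' < 2 * (m₁ : ℤ) * m₂ := by omega
        have hteq : t = tSample m₁ m₂ (2 * l'.toNat) := by
          rw [tSample]
          have hcast : ((2 * l'.toNat : ℕ) : ℝ) = (N : ℝ) := by
            have : ((l'.toNat : ℤ) : ℝ) = (l' : ℝ) := by
              rw [Int.toNat_of_nonneg hl'0]
            push_cast at this ⊢
            rw [this]
            have : (N : ℝ) = 2 * (l' : ℝ) := by exact_mod_cast hNe
            linarith
          rw [hcast]
          rw [eq_div_iff (by positivity)]
          linarith [hNR]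
        have hcast2 : ((2 * m₁ * m₂ : ℕ) : ℤ) = 2 * (m₁ : ℤ) * m₂ := by push_cast; ring
        have hlt : l'.toNat < 2 * m₁ * m₂ := by omega
        have := hns2 l'.toNat hlt hteq
        have hdvd' : m₁ ∣ l'.toNat := (Nat.modEq_zero_iff_dvd).mp this
        apply hdvd
        have h1 : (m₁ : ℤ) ∣ l' := by
          obtain ⟨c, hc⟩ := hdvd'
          refine ⟨c, ?_⟩
          have : ((l'.toNat : ℤ)) = (m₁ : ℤ) * c := by exact_mod_cast hc
          rwa [Int.toNat_of_nonneg hl'0] at this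
        have h2' : (m₁ : ℤ) ∣ (m₂ : ℤ) * j := by
          have heq : (m₂ : ℤ) * j = (m₁ : ℤ) * k - N := by rw [hN]; ring
          rw [heq, hNe]
          exact dvd_sub (Dvd.intro k rfl) (Dvd.dvd.mul_left h1 2)
        have hco : IsCoprime (m₁ : ℤ) (m₂ : ℤ) := Int.isCoprime_iff_gcd_eq_one.mpr (by
          rw [Int.gcd_natCast_natCast]; exact hcop)
        exact hco.dvd_of_dvd_mul_left h2'
    · exfalso
      obtain ⟨r, hr⟩ := Real.cos_eq_zero_iff.mp hct
      -- t = (2r+1)π/(2m₂)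
      have hteq : t = (2 * (r : ℝ) + 1) * π / (2 * m₂) := by
        field_simp at hr ⊢
        linarith
      have hr0 : 0 ≤ r := by
        by_contra hneg
        push_neg at hneg
        have : r ≤ -1 := by omega
        have hc : (r : ℝ) ≤ -1 := by exact_mod_cast this
        have h1 : (2 * (r : ℝ) + 1) ≤ -1 := by linarith
        have h2 : (2 * (r : ℝ) + 1) * π / (2 * m₂) < 0 := by
          apply div_neg_of_neg_of_pos
          · nlinarith
          · positivity
        linarith [ht.1, hteq ▸ h2]
      have hr2 : 2 * r + 1 < 4 * m₂ := by
        by_contra hge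
        push_neg at hge
        have hc : (4 * (m₂ : ℝ)) ≤ 2 * (r : ℝ) + 1 := by exact_mod_cast hge
        have := ht.2
        rw [hteq] at this
        rw [div_lt_iff₀ (by positivity)] at this
        nlinarith
      set l : ℕ := m₁ + 2 * m₁ * r.toNat with hl
      have hrT : ((r.toNat : ℤ)) = r := Int.toNat_of_nonneg hr0
      have hmod : l ≡ m₁ [MOD 2 * m₁] := by
        show l % (2 * m₁) = m₁ % (2 * m₁)
        rw [hl, show m₁ + 2 * m₁ * r.toNat = m₁ + (2 * m₁) * r.toNat by ring,
          Nat.add_mul_mod_self_left]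
      have hr2' : 2 * r.toNat + 1 < 4 * m₂ := by omega
      have hlb : l < 4 * m₁ * m₂ := by
        calc m₁ + 2 * m₁ * r.toNat = m₁ * (2 * r.toNat + 1) := by ring
          _ < m₁ * (4 * m₂) := (Nat.mul_lt_mul_left hm₁).mpr hr2'
          _ = 4 * m₁ * m₂ := by ring
      have hts : t = tSample m₁ m₂ l := by
        rw [tSample, hteq]
        have hcl : ((l : ℕ) : ℝ) = (m₁ : ℝ) * (2 * (r : ℝ) + 1) := by
          rw [hl]
          push_cast
          have hrr : ((r.toNat : ℕ) : ℝ) = (r : ℝ) := by exact_mod_cast hrT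
          rw [hrr]; ring
        rw [hcl]
        field_simp
      exact hns1 l hlb hts hmod
  · rintro ⟨hsI, k, hk⟩
    exact ⟨hsI, (rho_eq_iff' ho₁ ho₂ hcop α s t).mpr (Or.inl ⟨k, hk⟩)⟩


lemma Sset_four {m₁ m₂ : ℕ} (ho₁ : Odd m₁) (ho₂ : Odd m₂) (hcop : Nat.Coprime m₁ m₂)
    (α : ℝ) {l : ℕ} (hl : l < 2 * m₁ * m₂) (hnd : ¬ l ≡ 0 [MOD m₁]) :
    (Sset m₁ m₂ α (tSample m₁ m₂ (2 * l))).ncard = 4 := by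
  have hπ := Real.pi_pos
  have hm₁ : 0 < m₁ := ho₁.pos
  have hm₂ : 0 < m₂ := ho₂.pos
  have hm₁R : (m₁ : ℝ) ≠ 0 := by positivity
  have hm₂R : (m₂ : ℝ) ≠ 0 := by positivity
  have hm₁pos : (0 : ℝ) < m₁ := by positivity
  have hm₂pos : (0 : ℝ) < m₂ := by positivity
  obtain ⟨a, ha⟩ := ho₁
  obtain ⟨b, hb⟩ := ho₂
  have haZ : (m₁ : ℤ) = 2 * a + 1 := by exact_mod_cast ha
  have hbZ : (m₂ : ℤ) = 2 * b + 1 := by exact_mod_cast hb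
  have hdvd : ¬ (m₁ : ℤ) ∣ (l : ℤ) := by
    intro hd
    exact hnd (Nat.modEq_zero_iff_dvd.mpr (by exact_mod_cast hd))
  have hco : IsCoprime (m₁ : ℤ) (m₂ : ℤ) := Int.isCoprime_iff_gcd_eq_one.mpr (by
    rw [Int.gcd_natCast_natCast]; exact hcop)
  have hco2 := hco
  obtain ⟨u, v, hbez⟩ := hco
  -- the shift index J
  set A : ℤ := -(2 * l) * v with hA
  set J : ℤ := A % m₁ with hJ
  have hm₁Z : (0 : ℤ) < m₁ := by exact_mod_cast hm₁
  have hJ0 : 0 ≤ J := Int.emod_nonneg _ (by exact_mod_cast hm₁.ne')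
  have hJlt : J < m₁ := Int.emod_lt_of_pos _ hm₁Z
  have hmodJA : J ≡ A [ZMOD (m₁ : ℤ)] := by
    show J % (m₁ : ℤ) = A % m₁
    rw [hJ, Int.emod_emod_of_dvd _ dvd_rfl]
  have hkey : ∃ w : ℤ, (m₂ : ℤ) * J + 2 * l = m₁ * w := by
    have h1 : (m₂ : ℤ) * J + 2 * l ≡ m₂ * A + 2 * l [ZMOD (m₁ : ℤ)] :=
      (hmodJA.mul_left _).add_right _
    have h2 : (m₂ : ℤ) * A + 2 * l = m₁ * (2 * l * u) := by
      rw [hA]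
      linear_combination (-2 * (l : ℤ)) * hbez
    obtain ⟨w, hw⟩ := Int.modEq_zero_iff_dvd.mp (h1.trans (by rw [h2]; exact
      (Int.modEq_zero_iff_dvd.mpr ⟨2 * l * u, rfl⟩)))
    exact ⟨w, hw⟩
  obtain ⟨w, hw⟩ := hkey
  have hJne : J ≠ 0 := by
    intro h0
    rw [h0] at hw
    have hz : (m₁ : ℤ) ∣ 2 * l := ⟨w, by linarith⟩
    have h2l : m₁ ∣ 2 * l := by exact_mod_cast hz
    have hc2 : Nat.Coprime m₁ 2 := Nat.coprime_two_right.mpr ⟨a, ha⟩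
    have hml : m₁ ∣ l := hc2.dvd_of_dvd_mul_left h2l
    exact hdvd (by exact_mod_cast hml)
  set t : ℝ := tSample m₁ m₂ (2 * l) with htdef
  have ht2 : 2 * (m₁ : ℝ) * m₂ * t = 2 * (l : ℝ) * π := by
    rw [htdef, tSample]
    push_cast
    field_simp
  set tstar : ℝ := t + (J : ℝ) * π / m₁ with htsdef
  have hdivJ : (m₁ : ℝ) * ((J : ℝ) * π / m₁) = (J : ℝ) * π := by field_simp
  have hchar : Sset m₁ m₂ α t = Dset t ∪ Dset tstar := by
    ext s
    constructor
    · rintro ⟨hsI, hs⟩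
      rw [rho_eq_iff' ⟨a, ha⟩ ⟨b, hb⟩ hcop] at hs
      rcases hs with ⟨k, hk⟩ | ⟨j, k, h1, h2, he⟩ | ⟨hcs, hct⟩
      · exact Or.inl ⟨hsI, k, hk⟩
      · -- cross solutions lie in Dset tstar
        have hZR : ((m₁ : ℝ) * k) * π = ((m₂ : ℝ) * j + 2 * l) * π := by
          linear_combination (m₂ : ℝ) * h1 - (m₁ : ℝ) * h2 + ht2
        have hZ : (m₁ : ℤ) * k = m₂ * j + 2 * l := by
          have := mul_right_cancel₀ Real.pi_ne_zero hZR
          exact_mod_cast this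
        have hdj : (m₁ : ℤ) ∣ (m₂ : ℤ) * (j - J) := ⟨k - w, by linear_combination -hZ - hw⟩
        obtain ⟨r, hr⟩ := hco2.dvd_of_dvd_mul_left hdj
        refine Or.inr ⟨hsI, r, ?_⟩
        have hrR : (j : ℝ) - J = (m₁ : ℝ) * r := by exact_mod_cast hr
        have hfin : (m₁ : ℝ) * (s - tstar) = (m₁ : ℝ) * ((r : ℝ) * π) := by
          rw [htsdef]
          linear_combination h1 + π * hrR - hdivJ
        exact mul_left_cancel₀ hm₁R hfin
      · exfalso
        obtain ⟨r, hr⟩ := Real.cos_eq_zero_iff.mp hct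
        -- m₂ * t = l π / m₁, so 2l = (2r+1) m₁, contradicting parity
        have : (2 * (l : ℝ)) * π = ((2 * (r : ℝ) + 1) * m₁) * π := by
          have hmt : 2 * (m₁ : ℝ) * (m₂ * t) = 2 * l * π := by linarith [ht2]
          rw [hr] at hmt
          linear_combination -hmt
        have hZ : 2 * (l : ℤ) = (2 * r + 1) * m₁ := by
          have := mul_right_cancel₀ Real.pi_ne_zero this
          exact_mod_cast this
        have hev : Even ((2 * r + 1) * (m₁ : ℤ)) := by rw [← hZ]; exact ⟨l, by ring⟩
        rcases Int.even_mul.mp hev with hodd | hodd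
        · obtain ⟨c, hc⟩ := hodd; omega
        · obtain ⟨c, hc⟩ := hodd; omega
    · rintro (⟨hsI, k, hk⟩ | ⟨hsI, r, hr⟩)
      · exact ⟨hsI, (rho_eq_iff' ⟨a, ha⟩ ⟨b, hb⟩ hcop α s t).mpr (Or.inl ⟨k, hk⟩)⟩
      · refine ⟨hsI, (rho_eq_iff' ⟨a, ha⟩ ⟨b, hb⟩ hcop α s t).mpr
          (Or.inr (Or.inl ⟨m₁ * r + J, m₂ * r + w, ?_, ?_, ?_⟩))⟩
        · -- m₁ (s - t) = (m₁ r + J) π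
          push_cast
          rw [htsdef] at hr
          linear_combination (m₁ : ℝ) * hr + hdivJ
        · -- m₂ (s + t) = (m₂ r + w) π
          have hwR : (m₂ : ℝ) * J + 2 * l = (m₁ : ℝ) * w := by exact_mod_cast hw
          rw [htsdef] at hr
          have hfin : (m₁ : ℝ) * ((m₂ : ℝ) * (s + t)) = (m₁ : ℝ) * (((m₂ : ℝ) * r + w) * π) := by
            linear_combination (m₁ : ℝ) * (m₂ : ℝ) * hr + (m₂ : ℝ) * hdivJ + ht2 + π * hwR
          have hcc := mul_left_cancel₀ hm₁R hfin
          push_cast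
          linarith [hcc]
        · -- parity
          have hb2 : Even ((m₁ : ℤ) * ((m₁ * r + J) + (m₂ * r + w))) :=
            ⟨(a + b + 1) * ((m₁ : ℤ) * r + J) + l, by
              rw [show (m₁ : ℤ) * ((m₁ * r + J) + (m₂ * r + w))
                  = ((m₁ : ℤ) + m₂) * (m₁ * r + J) + 2 * l by linear_combination -hw,
                haZ, hbZ]
              ring⟩
          rcases Int.even_mul.mp hb2 with hev | hev
          · exact absurd hev (by rw [Int.not_even_iff_odd]; exact ⟨a, haZ⟩)
          · exact hev
  have hdisj : Disjoint (Dset t) (Dset tstar) := by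
    apply Dset_disjoint
    intro k hk
    rw [htsdef] at hk
    have hZkR : (-(J : ℝ)) * π = ((m₁ : ℝ) * k) * π := by
      linear_combination (m₁ : ℝ) * hk + hdivJ
    have hZk : -J = (m₁ : ℤ) * k := by
      have := mul_right_cancel₀ Real.pi_ne_zero hZkR
      exact_mod_cast this
    rcases le_or_gt 0 k with hk0 | hk0
    · have : 0 ≤ (m₁ : ℤ) * k := mul_nonneg hm₁Z.le hk0
      omega
    · have hk1 : k ≤ -1 := by omega
      have : (m₁ : ℤ) * k ≤ m₁ * (-1) := by
        exact mul_le_mul_of_nonneg_left hk1 hm₁Z.le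
      omega
  rw [hchar, Set.ncard_union_eq hdisj (Dset_finite t) (Dset_finite tstar),
    Dset_ncard, Dset_ncard]


lemma rho_periodic {m₁ m₂ : ℕ} (ho₁ : Odd m₁) (ho₂ : Odd m₂) (α : ℝ) :
    Function.Periodic (rho m₁ m₂ α) π := by
  intro x
  obtain ⟨a, ha⟩ := ho₁
  obtain ⟨b, hb⟩ := ho₂
  have h2 : (m₂ : ℝ) * (x + π) = ((m₂ : ℝ) * x + π) + (b : ℤ) * (2 * π) := by
    push_cast [hb]; ring
  have h1 : (m₁ : ℝ) * (x + π) - α * π = (((m₁ : ℝ) * x - α * π) + π) + (a : ℤ) * (2 * π) := by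
    push_cast [ha]; ring
  simp only [rho, h1, h2, Real.cos_add_int_mul_two_pi, Real.sin_add_int_mul_two_pi,
    Real.cos_add_pi, Real.sin_add_pi]
  simp only [Prod.mk.injEq]
  constructor <;> ring

lemma sqrt_two_gt_one : 1 < Real.sqrt 2 := by
  nlinarith [Real.sq_sqrt (by norm_num : (0 : ℝ) ≤ 2), Real.sqrt_nonneg 2]

lemma not_periodic_lt {m₁ m₂ : ℕ} (ho₁ : Odd m₁) (ho₂ : Odd m₂) (hcop : Nat.Coprime m₁ m₂)
    (α : ℝ) {q : ℝ} (hq0 : 0 < q) (hqπ : q < π) :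
    ¬ Function.Periodic (rho m₁ m₂ α) q := by
  intro hper
  have hπ := Real.pi_pos
  have hm₁ : 0 < m₁ := ho₁.pos
  have hm₂ : 0 < m₂ := ho₂.pos
  have hs2 : 1 < Real.sqrt 2 := sqrt_two_gt_one
  set s₀ : ℝ := π / Real.sqrt 2 with hs₀def
  have hs₀pos : 0 < s₀ := by positivity
  have hs₀lt : s₀ < π := by
    rw [hs₀def, div_lt_iff₀ (by positivity)]
    nlinarith
  have hnotsample : ∀ n : ℕ, s₀ ≠ tSample m₁ m₂ n := by
    intro n heq
    rcases Nat.eq_zero_or_pos n with rfl | hn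
    · have h0 : tSample m₁ m₂ 0 = 0 := by rw [tSample]; simp
      rw [h0] at heq
      exact hs₀pos.ne' heq
    · rw [tSample, hs₀def] at heq
      rw [div_eq_div_iff (by positivity) (by positivity)] at heq
      -- π * (2 m₁ m₂) = n π √2
      have hkey : (2 * (m₁ : ℝ) * m₂) = Real.sqrt 2 * n := by
        have : π * (2 * (m₁ : ℝ) * m₂) = π * (Real.sqrt 2 * n) := by linarith [heq]
        exact mul_left_cancel₀ Real.pi_ne_zero this
      apply irrational_sqrt_two
      refine ⟨(2 * m₁ * m₂ : ℚ) / n, ?_⟩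
      have hnR : (n : ℝ) ≠ 0 := by positivity
      push_cast
      rw [div_eq_iff hnR]
      linarith [hkey]
  have hns : ¬ ((∃ l : ℕ, l < 4 * m₁ * m₂ ∧ s₀ = tSample m₁ m₂ l ∧ l ≡ m₁ [MOD 2 * m₁]) ∨
       (∃ l : ℕ, l < 2 * m₁ * m₂ ∧ s₀ = tSample m₁ m₂ (2 * l) ∧ ¬ l ≡ 0 [MOD m₁])) := by
    rintro (⟨l, _, heq, _⟩ | ⟨l, _, heq, _⟩)
    · exact hnotsample l heq
    · exact hnotsample (2 * l) heq
  have hs₀I : s₀ ∈ Set.Ico (0 : ℝ) (2 * π) := ⟨hs₀pos.le, by linarith⟩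
  have hchar := Sset_generic ho₁ ho₂ hcop α hs₀I hns
  have hmem : s₀ + q ∈ Sset m₁ m₂ α s₀ := ⟨⟨by linarith, by linarith⟩, hper s₀⟩
  rw [hchar, Dset_eq_of_mem_Ico ⟨hs₀pos.le, hs₀lt⟩] at hmem
  simp only [Set.mem_insert_iff, Set.mem_singleton_iff] at hmem
  rcases hmem with h | h
  · have : q = 0 := by linarith
    linarith
  · have : q = π := by linarith
    linarith

end RhoAux

/-- Proposition 2.1 (case `m₁ + m₂` even): minimal period `π` and cardinalities of
`S^{(m)}(t)` for `t ∈ [0, 2π)`. -/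
theorem rhodonea_intersections_even (m₁ m₂ : ℕ) (hm₁ : 0 < m₁) (hm₂ : 0 < m₂)
    (hcop : Nat.Coprime m₁ m₂) (heven : Even (m₁ + m₂)) (α : ℝ) :
    (Function.Periodic (rho m₁ m₂ α) Real.pi ∧
      ∀ q : ℝ, 0 < q → q < Real.pi → ¬ Function.Periodic (rho m₁ m₂ α) q) ∧
    (∀ l : ℕ, l < 4 * m₁ * m₂ → l ≡ m₁ [MOD 2 * m₁] →
      (Sset m₁ m₂ α (tSample m₁ m₂ l)).ncard = 2 * m₂) ∧
    (∀ l : ℕ, l < 2 * m₁ * m₂ → ¬ l ≡ 0 [MOD m₁] →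
      (Sset m₁ m₂ α (tSample m₁ m₂ (2 * l))).ncard = 4) ∧
    (∀ t : ℝ, t ∈ Set.Ico (0 : ℝ) (2 * Real.pi) →
      ¬ ((∃ l : ℕ, l < 4 * m₁ * m₂ ∧ t = tSample m₁ m₂ l ∧ l ≡ m₁ [MOD 2 * m₁]) ∨
         (∃ l : ℕ, l < 2 * m₁ * m₂ ∧ t = tSample m₁ m₂ (2 * l) ∧ ¬ l ≡ 0 [MOD m₁])) →
      (Sset m₁ m₂ α t).ncard = 2) := by
  have hpar := Nat.even_add.mp heven
  have ho₁ : Odd m₁ := by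
    rcases Nat.even_or_odd m₁ with h | h
    · exfalso
      have h2 : Even m₂ := hpar.mp h
      have d1 : 2 ∣ m₁ := h.two_dvd
      have d2 : 2 ∣ m₂ := h2.two_dvd
      have := Nat.dvd_gcd d1 d2
      rw [hcop] at this
      omega
    · exact h
  have ho₂ : Odd m₂ := by
    rcases Nat.even_or_odd m₂ with h | h
    · exfalso
      have h1 : Even m₁ := hpar.mpr h
      exact (Nat.not_even_iff_odd.mpr ho₁) h1
    · exact h
  refine ⟨⟨RhoAux.rho_periodic ho₁ ho₂ α,
      fun q hq0 hqπ => RhoAux.not_periodic_lt ho₁ ho₂ hcop α hq0 hqπ⟩, ?_, ?_, ?_⟩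
  · intro l hl hmod
    have hmod' : l % (2 * m₁) = m₁ := by
      have := hmod
      unfold Nat.ModEq at this
      rw [Nat.mod_eq_of_lt (show m₁ < 2 * m₁ by omega)] at this
      exact this
    set r : ℕ := l / (2 * m₁) with hrdef
    have hld : 2 * m₁ * r + m₁ = l := by
      have := Nat.div_add_mod l (2 * m₁)
      rw [hmod'] at this
      rw [hrdef]
      linarith [this]
    have hc : Real.cos (m₂ * tSample m₁ m₂ l) = 0 := by
      apply Real.cos_eq_zero_iff.mpr
      refine ⟨(r : ℤ), ?_⟩
      rw [tSample, ← hld]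
      have hm₁R : (m₁ : ℝ) ≠ 0 := by positivity
      have hm₂R : (m₂ : ℝ) ≠ 0 := by positivity
      push_cast
      field_simp
    rw [RhoAux.Sset_origin hc, RhoAux.Zset_ncard hm₂]
  · intro l hl hnd
    exact RhoAux.Sset_four ho₁ ho₂ hcop α hl hnd
  · intro t ht hns
    rw [RhoAux.Sset_generic ho₁ ho₂ hcop α ht hns, RhoAux.Dset_ncard]
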